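/- Let h : ℝ → ℝ be defined by h(t) = (t+1)·sin(ln(t+1)) for t > 0 and h(t) = 0 for t ≤ 0, and let t_n = e^{2πn} − 1 for n ∈ ℕ. Then for every bounded set B ⊂ ℝ, h(t_n + s) → s as n → ∞ uniformly for s ∈ B. -/

import Mathlib

lemma logB {x : ℝ} (hx : |x| ≤ 1/2) : |Real.log (1+x) - x| ≤ 2*x^2 := by
  have h1 : |(-x)| < 1 := by rw [abs_neg]; linarith
  have h := Real.abs_log_sub_add_sum_range_le h1 1
  simp [Finset.sum_range_succ] at h
  rw [show Real.log (1+x) - x = -x + Real.log (1+x) from by ring]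
  refine h.trans ?_
  rw [div_le_iff₀ (by cases abs_cases x <;> linarith)]
  nlinarith [abs_nonneg x, sq_abs x]

lemma sinB {y : ℝ} (hy : |y| ≤ 1) : |Real.sin y - y| ≤ |y|^3 := by
  have h := Real.sin_bound hy
  have h4 : |y|^4 ≤ |y|^3 := pow_le_pow_of_le_one (abs_nonneg y) hy (by norm_num)
  have h5 : |y|^5 ≤ |y|^3 := pow_le_pow_of_le_one (abs_nonneg y) hy (by norm_num)
  have h0 : (0:ℝ) ≤ |y|^3 := pow_nonneg (abs_nonneg y) 3
  have ht : |Real.sin y - y| ≤ |Real.sin y - (y - y^3/6)| + |y^3/6| := by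
    calc |Real.sin y - y| = |(Real.sin y - (y - y^3/6)) + (-(y^3/6))| := by ring_nf
      _ ≤ _ := by rw [← abs_neg (y^3/6)]; exact abs_add_le _ _
  have hy3 : |y^3/6| = |y|^3/6 := by rw [abs_div, abs_pow]; norm_num
  linarith

noncomputable def hFun (t : ℝ) : ℝ :=
  if t > 0 then (t + 1) * Real.sin (Real.log (t + 1)) else 0

noncomputable def tSeq (n : ℕ) : ℝ := Real.exp (2 * Real.pi * n) - 1

set_option maxHeartbeats 1000000 in
theorem stmt0 :
    ∀ R > (0 : ℝ), ∀ ε > (0 : ℝ), ∃ N : ℕ, ∀ n ≥ N, ∀ s : ℝ, |s| ≤ R →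
      |hFun (tSeq n + s) - s| < ε := by
  intro R hR ε hε
  obtain ⟨N, hN⟩ := exists_nat_ge (max (2*R+2) (20*R^2/ε))
  refine ⟨N, fun n hn s hs => ?_⟩
  set E := Real.exp (2*Real.pi*↑n) with hEdef
  have hE0 : 0 < E := Real.exp_pos _
  have hEn : (n:ℝ) ≤ E := by
    have h1 := Real.add_one_le_exp (2*Real.pi*n)
    have hpi : (1:ℝ) ≤ Real.pi := by linarith [Real.pi_gt_three]
    have h2 : (n:ℝ) ≤ 2*Real.pi*n + 1 := by nlinarith [(Nat.cast_nonneg n : (0:ℝ) ≤ (n:ℝ))]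
    exact h2.trans h1
  have hNn : (N:ℝ) ≤ n := Nat.cast_le.mpr hn
  have hE1 : 2*R+2 ≤ E := le_trans ((le_max_left _ _).trans hN) (hNn.trans hEn)
  have hE2 : 20*R^2/ε ≤ E := le_trans ((le_max_right _ _).trans hN) (hNn.trans hEn)
  obtain ⟨hs1, hs2⟩ := abs_le.mp hs
  have htpos : 0 < tSeq n + s := by
    have : tSeq n = E - 1 := by rw [tSeq, hEdef]
    rw [this]; linarith
  have hval : hFun (tSeq n + s) = (E + s) * Real.sin (Real.log (E + s)) := by
    rw [hFun, if_pos htpos]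
    have : tSeq n + s + 1 = E + s := by rw [tSeq]; ring
    rw [this]
  set x := s / E with hxdef
  have hsx : s = E * x := by rw [hxdef]; field_simp
  have hx2 : |x| ≤ 1/2 := by
    rw [hxdef, abs_div, abs_of_pos hE0, div_le_iff₀ hE0]
    linarith
  obtain ⟨hx1, hx1'⟩ := abs_le.mp hx2
  have h1x : 0 < 1 + x := by linarith
  have hEs : E + s = E * (1 + x) := by rw [hsx]; ring
  have hlog : Real.log (E + s) = 2*Real.pi*↑n + Real.log (1+x) := by
    rw [hEs, Real.log_mul hE0.ne' h1x.ne', hEdef, Real.log_exp]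
  have hsin : Real.sin (Real.log (E+s)) = Real.sin (Real.log (1+x)) := by
    rw [hlog, show 2*Real.pi*↑n + Real.log (1+x) = Real.log (1+x) + ↑n*(2*Real.pi) from by ring,
      Real.sin_add_nat_mul_two_pi]
  set L := Real.log (1+x) with hLdef
  set A := Real.sin L with hAdef
  have hLx : |L - x| ≤ 2*x^2 := logB hx2
  have hLle2x : |L| ≤ 2*|x| := by
    have h1 : |L| ≤ |L - x| + |x| := by
      calc |L| = |(L - x) + x| := by ring_nf
        _ ≤ |L - x| + |x| := abs_add_le _ _
    nlinarith [sq_abs x, abs_nonneg x]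
  have hLle : |L| ≤ 1 := by
    have := abs_nonneg x; linarith
  have hsin3 : |A - L| ≤ |L|^3 := sinB hLle
  have hL3 : |L|^3 ≤ 8*|x|^3 := by
    nlinarith [abs_nonneg L, abs_nonneg x, pow_le_pow_left₀ (abs_nonneg L) hLle2x 3]
  have hx3 : 8*|x|^3 ≤ 4*x^2 := by
    have e : |x|^3 = |x| * x^2 := by rw [pow_succ, pow_two, ← sq_abs]; ring
    rw [e]
    linarith [mul_le_mul_of_nonneg_right hx2 (sq_nonneg x)]
  clear_value A L x E
  have key : |(1+x)*A - x| ≤ 10*x^2 := by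
    have e1 : (1+x)*A - x = (1+x)*(A - L) + ((L - x) + x*L) := by ring
    have c1 : |(1+x)*A - x| ≤ |(1+x)*(A-L)| + (|L-x| + |x*L|) := by
      rw [e1]
      calc |(1+x)*(A - L) + ((L - x) + x*L)| ≤ |(1+x)*(A-L)| + |(L-x) + x*L| := abs_add_le _ _
        _ ≤ _ := by linarith [abs_add_le (L-x) (x*L)]
    have c2 : |(1+x)*(A-L)| = (1+x)*|A-L| := by rw [abs_mul, abs_of_pos h1x]
    have c3 : |x*L| = |x| * |L| := abs_mul _ _
    have c4 : (1+x)*|A-L| ≤ (3/2) * (8 * |x|^3) :=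
      mul_le_mul (by linarith) (hsin3.trans hL3) (abs_nonneg _) (by norm_num)
    have c5 : |x| * |L| ≤ 2*x^2 := by
      have h := mul_le_mul_of_nonneg_left hLle2x (abs_nonneg x)
      have h2 : |x| * (2 * |x|) = 2*x^2 := by rw [← sq_abs]; ring
      linarith
    have c6 : (3/2) * (8 * |x|^3) ≤ 6*x^2 := by linarith
    rw [c2, c3] at c1
    linarith
  have hgoal : |hFun (tSeq n + s) - s| ≤ E * (10*x^2) := by
    rw [hval, hsin, hEs, hsx,
      show E*(1+x)*A - E*x = E*((1+x)*A - x) from by ring, abs_mul, abs_of_pos hE0]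
    exact mul_le_mul_of_nonneg_left key hE0.le
  have hfin : E * (10*x^2) ≤ ε/2 := by
    have hx2eq : x^2 = s^2/E^2 := by rw [hxdef]; rw [div_pow]
    have heq : E * (10*(s^2/E^2)) = 10*s^2/E := by field_simp
    rw [hx2eq, heq, div_le_iff₀ hE0]
    have hsR : s^2 ≤ R^2 := sq_le_sq' hs1 hs2
    have h20 : 20*R^2 ≤ ε*E := by
      rw [div_le_iff₀ hε] at hE2; linarith
    nlinarith
  linarith
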